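/- The edge-labeling λ(a,b) = (j, a_j), where j is the least index at which a and b differ, is an EL-labeling of the m-Tamari lattice T_n^(m) with respect to the order (i,x) ≤ (j,y) iff i < j, or i = j and x ≥ y. That is, every interval [a,b] of T_n^(m) contains exactly one rising maximal chain, and this chain is lexicographically first among all maximal chains in [a,b]. -/

import Mathlib

open scoped Classical

/-- An `m`-Dyck sequence of height `n` (0-indexed): weakly increasing with `a i ≤ m * i`. -/
def IsDyck (m n : ℕ) (a : Fin n → ℕ) : Prop :=
  Monotone a ∧ ∀ i : Fin n, a i ≤ m * i.val

/-- `k` is the last index of the primitive subsequence of `a` at position `i`. -/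
def IsPrimEnd (m n : ℕ) (a : Fin n → ℕ) (i k : Fin n) : Prop :=
  i ≤ k ∧ (∀ j : Fin n, i < j → j ≤ k → a j - a i < m * (j.val - i.val)) ∧
    (k.val + 1 = n ∨ ∃ h : k.val + 1 < n, m * (k.val + 1 - i.val) ≤ a ⟨k.val + 1, h⟩ - a i)

/-- The covering relation of the `m`-Tamari lattice: decrease the primitive
subsequence at a position `i+1` with `a i < a (i+1)` by one. -/
def Covers (m n : ℕ) (a b : Fin n → ℕ) : Prop :=
  ∃ (i : ℕ) (h : i + 1 < n) (k : Fin n),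
    a ⟨i, Nat.lt_of_succ_lt h⟩ < a ⟨i + 1, h⟩ ∧
    IsPrimEnd m n a ⟨i + 1, h⟩ k ∧
    b = fun j => if (⟨i + 1, h⟩ : Fin n) ≤ j ∧ j ≤ k then a j - 1 else a j

/-- The order of the `m`-Tamari lattice: reflexive-transitive closure of `Covers`. -/
def TamariLE (m n : ℕ) (a b : Fin n → ℕ) : Prop :=
  Relation.ReflTransGen (Covers m n) a b

/-- Extend a sequence on `Fin n` to `ℕ` by `0`. -/
noncomputable def extSeq (n : ℕ) (x : Fin n → ℕ) : ℕ → ℕ :=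
  fun j => if h : j < n then x ⟨j, h⟩ else 0

/-- The least index at which `x` and `y` differ. -/
noncomputable def diffIdx (n : ℕ) (x y : Fin n → ℕ) : ℕ :=
  sInf {j : ℕ | extSeq n x j ≠ extSeq n y j}

/-- The edge label `λ(x,y) = (j, x_j)`, `j` the least index where `x`,`y` differ. -/
noncomputable def lbl (n : ℕ) (x y : Fin n → ℕ) : ℕ × ℕ :=
  (diffIdx n x y, extSeq n x (diffIdx n x y))

/-- Strict order on labels: `(i,x) < (j,y)` iff `i < j`, or `i = j` and `x > y`. -/
def LblLT (p q : ℕ × ℕ) : Prop := p.1 < q.1 ∨ (p.1 = q.1 ∧ q.2 < p.2)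

/-- Weak order on labels. -/
def LblLE (p q : ℕ × ℕ) : Prop := p = q ∨ LblLT p q

/-- The sequence of edge labels of a chain. -/
noncomputable def labels (n : ℕ) (c : List (Fin n → ℕ)) : List (ℕ × ℕ) :=
  List.zipWith (lbl n) c c.tail

/-- A maximal chain in the interval `[a,b]`: a saturated chain of covers from `a` to `b`. -/
def IsMaxChn (m n : ℕ) (a b : Fin n → ℕ) (c : List (Fin n → ℕ)) : Prop :=
  c.Chain' (Covers m n) ∧ c.head? = some a ∧ c.getLast? = some b

/-- A chain is rising if its label sequence is strictly increasing. -/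
noncomputable def Rising (n : ℕ) (c : List (Fin n → ℕ)) : Prop :=
  (labels n c).Chain' LblLT

/-- A chain is falling if its label sequence is weakly decreasing. -/
noncomputable def Falling (n : ℕ) (c : List (Fin n → ℕ)) : Prop :=
  (labels n c).Chain' (fun p q => LblLE q p)

/-- Lexicographic comparison of label sequences. -/
def LexLE (l₁ l₂ : List (ℕ × ℕ)) : Prop := l₁ = l₂ ∨ List.Lex LblLT l₁ l₂

namespace TamariEL

variable {m n : ℕ}

/-- Decrement of `a` on the index segment `[p,k]`. -/
def dec (n : ℕ) (a : Fin n → ℕ) (p k : ℕ) : Fin n → ℕ :=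
  fun j => if p ≤ (j : ℕ) ∧ (j : ℕ) ≤ k then a j - 1 else a j

lemma dec_at (a : Fin n → ℕ) (p k q : ℕ) (hq : q < n) :
    dec n a p k ⟨q, hq⟩ = if p ≤ q ∧ q ≤ k then a ⟨q, hq⟩ - 1 else a ⟨q, hq⟩ := rfl

lemma dec_le (a : Fin n → ℕ) (p k : ℕ) (i : Fin n) : dec n a p k i ≤ a i := by
  unfold dec; split <;> omega

/-- There is a cover of `a` decreasing exactly the segment `[p,k]`. -/
def CovAt (m n : ℕ) (a : Fin n → ℕ) (p k : ℕ) : Prop :=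
  ∃ (_ : 0 < p) (hpn : p < n) (hkn : k < n),
    a ⟨p - 1, Nat.lt_of_le_of_lt (Nat.sub_le p 1) hpn⟩ < a ⟨p, hpn⟩ ∧
    IsPrimEnd m n a ⟨p, hpn⟩ ⟨k, hkn⟩

lemma isPrimEnd_iff (a : Fin n → ℕ) {p k : ℕ} (hpn : p < n) (hkn : k < n) :
    IsPrimEnd m n a ⟨p, hpn⟩ ⟨k, hkn⟩ ↔
      p ≤ k ∧ (∀ q (hq : q < n), p < q → q ≤ k → a ⟨q, hq⟩ - a ⟨p, hpn⟩ < m * (q - p)) ∧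
      (k + 1 = n ∨ ∃ h : k + 1 < n, m * (k + 1 - p) ≤ a ⟨k + 1, h⟩ - a ⟨p, hpn⟩) := by
  constructor
  · rintro ⟨h1, h2, h3⟩
    exact ⟨h1, fun q hq hpq hqk => h2 ⟨q, hq⟩ hpq hqk, h3⟩
  · rintro ⟨h1, h2, h3⟩
    exact ⟨h1, fun q hpq hqk => h2 q.val q.isLt hpq hqk, h3⟩

lemma covers_iff {a b : Fin n → ℕ} :
    Covers m n a b ↔ ∃ p k, CovAt m n a p k ∧ b = dec n a p k := by
  constructor
  · rintro ⟨i, h, k, h1, h2, h3⟩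
    refine ⟨i + 1, k.val, ⟨Nat.succ_pos i, h, k.isLt, ?_, ?_⟩, ?_⟩
    · have e1 : (⟨i + 1 - 1, Nat.lt_of_le_of_lt (Nat.sub_le (i+1) 1) h⟩ : Fin n)
          = ⟨i, Nat.lt_of_succ_lt h⟩ := by ext; simp
      rw [e1]; exact h1
    · have e2 : (⟨k.val, k.isLt⟩ : Fin n) = k := rfl
      rw [e2]; exact h2
    · subst h3
      funext j
      simp only [dec, Fin.le_def]
  · rintro ⟨p, k, ⟨hp, hpn, hkn, hlt, hprim⟩, rfl⟩
    obtain ⟨p', rfl⟩ : ∃ p', p = p' + 1 := ⟨p - 1, by omega⟩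
    refine ⟨p', hpn, ⟨k, hkn⟩, ?_, hprim, ?_⟩
    · have e1 : (⟨p' + 1 - 1, Nat.lt_of_le_of_lt (Nat.sub_le (p'+1) 1) hpn⟩ : Fin n)
          = ⟨p', Nat.lt_of_succ_lt hpn⟩ := by ext; simp
      rw [← e1]; exact hlt
    · funext j
      simp only [dec, Fin.le_def]

lemma covers_pointwise_le {a b : Fin n → ℕ} (h : Covers m n a b) : ∀ j, b j ≤ a j := by
  obtain ⟨p, k, _, rfl⟩ := covers_iff.mp h
  exact dec_le a p k

lemma covers_sum_lt {a b : Fin n → ℕ} (h : Covers m n a b) :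
    (∑ i, b i) < ∑ i, a i := by
  obtain ⟨p, k, ⟨hp, hpn, hkn, hlt, hprim⟩, rfl⟩ := covers_iff.mp h
  have hpk : p ≤ k := by
    have := (isPrimEnd_iff (m := m) a hpn hkn).mp hprim
    exact this.1
  refine Finset.sum_lt_sum (fun i _ => dec_le a p k i) ⟨⟨p, hpn⟩, Finset.mem_univ _, ?_⟩
  rw [dec_at, if_pos ⟨le_refl p, hpk⟩]
  omega

lemma tamari_pointwise_le {a b : Fin n → ℕ} (h : TamariLE m n a b) : ∀ j, b j ≤ a j := by
  induction h with
  | refl => exact fun j => le_refl _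
  | tail _ hcov ih => exact fun j => le_trans (covers_pointwise_le hcov j) (ih j)

lemma tamari_sum_le {a b : Fin n → ℕ} (h : TamariLE m n a b) :
    (∑ i, b i) ≤ ∑ i, a i := by
  induction h with
  | refl => exact le_refl _
  | tail _ hcov ih => exact le_trans (le_of_lt (covers_sum_lt hcov)) ih

lemma covers_dyck {a b : Fin n → ℕ} (ha : IsDyck m n a) (h : Covers m n a b) :
    IsDyck m n b := by
  obtain ⟨p, k, ⟨hp, hpn, hkn, hlt, hprim⟩, rfl⟩ := covers_iff.mp h
  constructor
  · intro i i' hii'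
    have h1 : a i ≤ a i' := ha.1 hii'
    have hii : (i : ℕ) ≤ (i' : ℕ) := hii'
    unfold dec
    split_ifs with hc1 hc2 hc2
    · omega
    · -- i in segment, i' not : then i' > k
      have : (i' : ℕ) > k := by omega
      omega
    · -- i not in segment, i' in segment: i < p
      have hip : (i : ℕ) < p := by omega
      have h2 : a i ≤ a ⟨p - 1, Nat.lt_of_le_of_lt (Nat.sub_le p 1) hpn⟩ := by
        apply ha.1; simp [Fin.le_def]; omega
      have h3 : a ⟨p, hpn⟩ ≤ a i' := by
        apply ha.1; simp [Fin.le_def]; omega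
      omega
    · omega
  · intro i
    exact le_trans (dec_le a p k i) (ha.2 i)

lemma tamari_dyck {a b : Fin n → ℕ} (ha : IsDyck m n a) (h : TamariLE m n a b) :
    IsDyck m n b := by
  induction h with
  | refl => exact ha
  | tail _ hcov ih => exact covers_dyck ih hcov

lemma primEnd_unique {a : Fin n → ℕ} {i k k' : Fin n}
    (h1 : IsPrimEnd m n a i k) (h2 : IsPrimEnd m n a i k') : k = k' := by
  rcases lt_trichotomy k k' with hlt | heq | hlt
  · exfalso
    obtain ⟨hik, hval, hterm⟩ := h1
    obtain ⟨hik', hval', _⟩ := h2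
    have hk1n : k.val + 1 < n := by
      have := k'.isLt
      have : k.val < k'.val := hlt
      omega
    have hik2 : i.val ≤ k.val := hik
    have hkk2 : k.val < k'.val := hlt
    rcases hterm with h | ⟨h, hge⟩
    · omega
    · have hlt2 := hval' ⟨k.val + 1, h⟩ (by simp only [Fin.lt_def]; omega) (by simp only [Fin.le_def]; omega)
      exact absurd hge (not_le.mpr hlt2)
  · exact heq
  · exfalso
    obtain ⟨hik, hval, hterm⟩ := h2
    obtain ⟨hik', hval', _⟩ := h1
    have hk1n : k'.val + 1 < n := by
      have := k.isLt
      have : k'.val < k.val := hlt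
      omega
    have hik2 : i.val ≤ k'.val := hik
    have hkk2 : k'.val < k.val := hlt
    rcases hterm with h | ⟨h, hge⟩
    · omega
    · have hlt2 := hval' ⟨k'.val + 1, h⟩ (by simp only [Fin.lt_def]; omega) (by simp only [Fin.le_def]; omega)
      exact absurd hge (not_le.mpr hlt2)

lemma covAt_unique {a : Fin n → ℕ} {p k k' : ℕ}
    (h1 : CovAt m n a p k) (h2 : CovAt m n a p k') : k = k' := by
  obtain ⟨_, hpn, hkn, _, hprim⟩ := h1
  obtain ⟨_, _, hkn', _, hprim'⟩ := h2
  have := primEnd_unique hprim hprim'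
  exact congrArg Fin.val this

/-- Existence of a primitive end at any position. -/
lemma primEnd_exists (a : Fin n → ℕ) (p : ℕ) (hpn : p < n) :
    ∃ (K : ℕ) (hK : K < n), IsPrimEnd m n a ⟨p, hpn⟩ ⟨K, hK⟩ := by
  by_cases hex : ∃ t, p < t ∧ ∃ h : t < n, m * (t - p) ≤ a ⟨t, h⟩ - a ⟨p, hpn⟩
  · set t0 := Nat.find hex with ht0
    obtain ⟨hpt0, ht0n, hge⟩ := Nat.find_spec hex
    have hmin : ∀ t, t < t0 → ¬(p < t ∧ ∃ h : t < n, m * (t - p) ≤ a ⟨t, h⟩ - a ⟨p, hpn⟩) :=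
      fun t ht => Nat.find_min hex ht
    refine ⟨t0 - 1, by omega, (isPrimEnd_iff a hpn (by omega)).mpr ⟨by omega, ?_, ?_⟩⟩
    · intro q hq hpq hqk
      have hq0 := hmin q (by omega)
      push_neg at hq0
      have := hq0 hpq hq
      omega
    · right
      refine ⟨by omega, ?_⟩
      have e : t0 - 1 + 1 = t0 := by omega
      have e2 : (⟨t0 - 1 + 1, by omega⟩ : Fin n) = ⟨t0, ht0n⟩ := by ext; simp [e]
      rw [e2]
      have e3 : t0 - 1 + 1 - p = t0 - p := by omega
      rw [e3]
      exact hge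
  · push_neg at hex
    refine ⟨n - 1, by omega, (isPrimEnd_iff a hpn (by omega)).mpr ⟨by omega, ?_, ?_⟩⟩
    · intro q hq hpq hqk
      have := hex q hpq hq
      omega
    · left; omega

lemma covAt_exists (a : Fin n → ℕ) (p : ℕ) (hp : 0 < p) (hpn : p < n)
    (hlt : a ⟨p - 1, Nat.lt_of_le_of_lt (Nat.sub_le p 1) hpn⟩ < a ⟨p, hpn⟩) :
    ∃ K, CovAt m n a p K := by
  obtain ⟨K, hK, hprim⟩ := primEnd_exists (m := m) a p hpn
  exact ⟨K, hp, hpn, hK, hlt, hprim⟩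

lemma diffIdx_eq {x y : Fin n → ℕ} {j : ℕ} (hj : j < n)
    (hne : x ⟨j, hj⟩ ≠ y ⟨j, hj⟩)
    (hmin : ∀ i (hi : i < n), i < j → x ⟨i, hi⟩ = y ⟨i, hi⟩) : diffIdx n x y = j := by
  have hmem : j ∈ {i : ℕ | extSeq n x i ≠ extSeq n y i} := by
    simp only [Set.mem_setOf_eq, extSeq, dif_pos hj]
    exact hne
  apply le_antisymm (Nat.sInf_le hmem)
  by_contra hcon
  push_neg at hcon
  have hmem2 := Nat.sInf_mem (Set.nonempty_of_mem hmem)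
  set s := sInf {i : ℕ | extSeq n x i ≠ extSeq n y i} with hs
  have hsn : s < n := lt_trans hcon hj
  simp only [Set.mem_setOf_eq, extSeq, dif_pos hsn] at hmem2
  exact hmem2 (hmin s hsn hcon)

lemma lbl_eq {x y : Fin n → ℕ} {j : ℕ} (hj : j < n)
    (hne : x ⟨j, hj⟩ ≠ y ⟨j, hj⟩)
    (hmin : ∀ i (hi : i < n), i < j → x ⟨i, hi⟩ = y ⟨i, hi⟩) :
    lbl n x y = (j, x ⟨j, hj⟩) := by
  have hd := diffIdx_eq hj hne hmin
  simp only [lbl, hd, extSeq, dif_pos hj]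

lemma lbl_dec {a : Fin n → ℕ} {p k : ℕ} (h : CovAt m n a p k) (hpn : p < n) :
    lbl n a (dec n a p k) = (p, a ⟨p, hpn⟩) := by
  obtain ⟨hp, hpn', hkn, hlt, hprim⟩ := h
  have hpk : p ≤ k := ((isPrimEnd_iff (m := m) a hpn' hkn).mp hprim).1
  apply lbl_eq hpn
  · rw [dec_at, if_pos ⟨le_refl p, hpk⟩]
    have : 0 < a ⟨p, hpn⟩ := by
      have : a ⟨p - 1, Nat.lt_of_le_of_lt (Nat.sub_le p 1) hpn⟩ = a ⟨p - 1, Nat.lt_of_le_of_lt (Nat.sub_le p 1) hpn'⟩ := rfl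
      omega
    omega
  · intro i hi hij
    rw [dec_at, if_neg (by omega)]

lemma diffIdx_spec {a b : Fin n → ℕ} (hne : a ≠ b) :
    ∃ hj : diffIdx n a b < n,
      a ⟨diffIdx n a b, hj⟩ ≠ b ⟨diffIdx n a b, hj⟩ ∧
      ∀ i (hi : i < n), i < diffIdx n a b → a ⟨i, hi⟩ = b ⟨i, hi⟩ := by
  have hnonempty : {i : ℕ | extSeq n a i ≠ extSeq n b i}.Nonempty := by
    by_contra hcon
    push_neg at hcon
    apply hne
    funext i
    have : extSeq n a i.val = extSeq n b i.val := by
      by_contra hc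
      have : (i : ℕ) ∈ {i : ℕ | extSeq n a i ≠ extSeq n b i} := hc
      rw [hcon] at this
      exact this
    simpa only [extSeq, dif_pos i.isLt, Fin.eta] using this
  have hmem := Nat.sInf_mem hnonempty
  set s := sInf {i : ℕ | extSeq n a i ≠ extSeq n b i} with hs
  have hsn : s < n := by
    by_contra hc
    push_neg at hc
    simp only [Set.mem_setOf_eq, extSeq, dif_neg (not_lt.mpr hc)] at hmem
    exact hmem rfl
  refine ⟨hsn, ?_, ?_⟩
  · have h := hmem
    simp only [Set.mem_setOf_eq, extSeq, dif_pos hsn] at h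
    exact h
  · intro i hi his
    have := Nat.notMem_of_lt_sInf (s := {i : ℕ | extSeq n a i ≠ extSeq n b i}) his
    simp only [Set.mem_setOf_eq, extSeq, dif_pos hi, not_not] at this
    exact this

lemma mul_sub_split (m x y z : ℕ) (h1 : z ≤ y) (h2 : y ≤ x) :
    m * (x - z) = m * (x - y) + m * (y - z) := by
  rw [← Nat.mul_add]
  congr 1
  omega

end TamariEL


namespace TamariEL

lemma key (hm : 0 < m) {b : Fin n → ℕ} (hb : IsDyck m n b) :
    ∀ a : Fin n → ℕ, TamariLE m n a b → IsDyck m n a →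
    ∀ (j : ℕ) (hj : j < n), a ⟨j, hj⟩ ≠ b ⟨j, hj⟩ →
      (∀ i (hi : i < n), i < j → a ⟨i, hi⟩ = b ⟨i, hi⟩) →
    ∃ K, CovAt m n a j K ∧ TamariLE m n (dec n a j K) b := by
  have harith1 : ∀ P x y : ℕ, y ≤ x → P < x - y → P ≤ x - 1 - y := by
    intro P x y h1 h2; omega
  have harith2 : ∀ P1 P2 x y z : ℕ, z ≤ y → y ≤ x → x - y < P1 → P2 = y - z →
      x - 1 - z < P1 + P2 := by
    intro P1 P2 x y z h1 h2 h3 h4; omega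
  have harith3 : ∀ P1 P2 x y z : ℕ, z ≤ y → y ≤ x → P1 ≤ x - y → P2 = y - z →
      P1 + P2 ≤ x - z := by
    intro P1 P2 x y z h1 h2 h3 h4; omega
  have harith4 : ∀ x y z : ℕ, 1 ≤ z → z ≤ x → x < y → x - 1 < y - 1 := by
    intro x y z h1 h2 h3; omega
  have harith5 : ∀ x z : ℕ, 1 ≤ x - z → x - 1 - z < x - z := by
    intro x z h1; omega
  intro a hab
  induction hab using Relation.ReflTransGen.head_induction_on with
  | refl =>
    intro _ j hj hne _
    exact absurd rfl hne
  | head hac hcb ih =>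
    rename_i a c
    intro ha j hj hne hmin
    have hab : TamariLE m n a b := Relation.ReflTransGen.head hac hcb
    have hble : ∀ i, b i ≤ a i := tamari_pointwise_le hab
    have hbj : b ⟨j, hj⟩ < a ⟨j, hj⟩ := lt_of_le_of_ne (hble _) (Ne.symm hne)
    have haM : ∀ (x y : ℕ) (hx : x < n) (hy : y < n), x ≤ y → a ⟨x, hx⟩ ≤ a ⟨y, hy⟩ :=
      fun x y hx hy h => ha.1 (show (⟨x, hx⟩ : Fin n) ≤ ⟨y, hy⟩ from h)
    have hj1 : 0 < j := by
      rcases Nat.eq_zero_or_pos j with rfl | h0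
      · exfalso
        have h1 := ha.2 ⟨0, hj⟩
        have h2 := hb.2 ⟨0, hj⟩
        simp only [Fin.val_mk, Nat.mul_zero, Nat.le_zero] at h1 h2
        omega
      · exact h0
    have hjm1 : j - 1 < n := Nat.lt_of_le_of_lt (Nat.sub_le j 1) hj
    have hcov : a ⟨j - 1, hjm1⟩ < a ⟨j, hj⟩ := by
      have e1 : a ⟨j - 1, hjm1⟩ = b ⟨j - 1, hjm1⟩ := hmin (j - 1) hjm1 (by omega)
      have e2 : b ⟨j - 1, hjm1⟩ ≤ b ⟨j, hj⟩ :=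
        hb.1 (show (⟨j - 1, hjm1⟩ : Fin n) ≤ ⟨j, hj⟩ from by
          simp only [Fin.mk_le_mk]; omega)
      omega
    have haj1 : 1 ≤ a ⟨j, hj⟩ := by omega
    obtain ⟨p, kk, hcovAt, hceq⟩ := covers_iff.mp hac
    obtain ⟨hp0, hpn, hkkn, hplt, hprim⟩ := hcovAt
    have hcovAt : CovAt m n a p kk := ⟨hp0, hpn, hkkn, hplt, hprim⟩
    subst hceq
    obtain ⟨hpkk, hVa, hTa⟩ := (isPrimEnd_iff (m := m) a hpn hkkn).mp hprim
    have hcble : ∀ i, b i ≤ dec n a p kk i := tamari_pointwise_le hcb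
    have hgp1 : p - 1 < n := Nat.lt_of_le_of_lt (Nat.sub_le p 1) hpn
    have hap1 : 0 < a ⟨p, hpn⟩ := by
      have h1 : a ⟨p - 1, hgp1⟩ < a ⟨p, hpn⟩ := hplt
      omega
    have hpj : j ≤ p := by
      by_contra hc
      push_neg at hc
      have h1 : a ⟨p, hpn⟩ = b ⟨p, hpn⟩ := hmin p hpn hc
      have h2 := hcble ⟨p, hpn⟩
      rw [dec_at, if_pos ⟨le_refl p, hpkk⟩] at h2
      omega
    rcases eq_or_lt_of_le hpj with heq | hjp
    · subst heq
      exact ⟨kk, hcovAt, hcb⟩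
    -- now j < p
    have hcne : dec n a p kk ⟨j, hj⟩ ≠ b ⟨j, hj⟩ := by
      rw [dec_at, if_neg (by omega)]; exact hne
    have hcmin : ∀ i (hi : i < n), i < j → dec n a p kk ⟨i, hi⟩ = b ⟨i, hi⟩ := by
      intro i hi hij
      rw [dec_at, if_neg (by omega)]
      exact hmin i hi hij
    have hcdyck := covers_dyck ha hac
    obtain ⟨K1, hK1cov, hK1tam⟩ := ih hcdyck j hj hcne hcmin
    obtain ⟨_, _, hK1n, _, hprimK1⟩ := hK1cov
    obtain ⟨K, hKn, hprimK⟩ := primEnd_exists (m := m) a j hj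
    obtain ⟨hjK, hVK, hTK⟩ := (isPrimEnd_iff (m := m) a hj hKn).mp hprimK
    have hcovAtK : CovAt m n a j K := ⟨hj1, hj, hKn, hcov, hprimK⟩
    refine ⟨K, hcovAtK, ?_⟩
    rcases le_or_gt p K with hpK | hKp
    · -- case (i) : p inside the primitive segment of j, so [p,kk] ⊆ (j,K]
      have hkkK : kk ≤ K := by
        by_contra hc
        push_neg at hc
        have hK1lt : K + 1 < n := by omega
        have h1 : a ⟨K + 1, hK1lt⟩ - a ⟨p, hpn⟩ < m * (K + 1 - p) :=
          hVa (K + 1) hK1lt (by omega) (by omega)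
        have h2 : a ⟨p, hpn⟩ - a ⟨j, hj⟩ < m * (p - j) := hVK p hpn hjp hpK
        have h3 : m * (K + 1 - j) ≤ a ⟨K + 1, hK1lt⟩ - a ⟨j, hj⟩ := by
          rcases hTK with h | ⟨h, hge⟩
          · omega
          · exact hge
        have hs : m * (K + 1 - j) = m * (K + 1 - p) + m * (p - j) :=
          mul_sub_split m (K + 1) p j (le_of_lt hjp) (by omega)
        have hm1 : a ⟨j, hj⟩ ≤ a ⟨p, hpn⟩ := haM j p hj hpn (le_of_lt hjp)
        have hm2 : a ⟨p, hpn⟩ ≤ a ⟨K + 1, hK1lt⟩ := haM p (K + 1) hpn hK1lt (by omega)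
        omega
      have hprimCK : IsPrimEnd m n (dec n a p kk) ⟨j, hj⟩ ⟨K, hKn⟩ := by
        rw [isPrimEnd_iff]
        refine ⟨hjK, ?_, ?_⟩
        · intro q hq hjq hqK
          have e1 : dec n a p kk ⟨j, hj⟩ = a ⟨j, hj⟩ := by
            rw [dec_at, if_neg (by omega)]
          have e2 : dec n a p kk ⟨q, hq⟩ ≤ a ⟨q, hq⟩ := dec_le a p kk ⟨q, hq⟩
          rw [e1]
          exact lt_of_le_of_lt (Nat.sub_le_sub_right e2 _) (hVK q hq hjq hqK)
        · rcases hTK with h | ⟨h, hge⟩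
          · left; exact h
          · right
            refine ⟨h, ?_⟩
            have e1 : dec n a p kk ⟨j, hj⟩ = a ⟨j, hj⟩ := by
              rw [dec_at, if_neg (by omega)]
            have e2 : dec n a p kk ⟨K + 1, h⟩ = a ⟨K + 1, h⟩ := by
              rw [dec_at, if_neg (by omega)]
            rw [e1, e2]; exact hge
      have hK1K : K1 = K := congrArg Fin.val (primEnd_unique hprimK1 hprimCK)
      rw [hK1K] at hK1tam
      have hcovg : CovAt m n (dec n a j K) p kk := by
        refine ⟨hp0, hpn, hkkn, ?_, ?_⟩
        · have e1 : dec n a j K ⟨p - 1, Nat.lt_of_le_of_lt (Nat.sub_le p 1) hpn⟩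
              = a ⟨p - 1, hgp1⟩ - 1 := by
            rw [dec_at, if_pos ⟨by omega, by omega⟩]
          have e2 : dec n a j K ⟨p, hpn⟩ = a ⟨p, hpn⟩ - 1 := by
            rw [dec_at, if_pos ⟨by omega, by omega⟩]
          have h1 : a ⟨p - 1, hgp1⟩ < a ⟨p, hpn⟩ := hplt
          have h2 : a ⟨j, hj⟩ ≤ a ⟨p - 1, hgp1⟩ := haM j (p - 1) hj hgp1 (Nat.le_pred_of_lt hjp)
          rw [e1, e2]
          exact harith4 _ _ _ haj1 h2 h1
        · rw [isPrimEnd_iff]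
          refine ⟨hpkk, ?_, ?_⟩
          · intro q hq hpq hqkk
            have e2 : dec n a j K ⟨p, hpn⟩ = a ⟨p, hpn⟩ - 1 := by
              rw [dec_at, if_pos ⟨by omega, by omega⟩]
            have e3 : dec n a j K ⟨q, hq⟩ = a ⟨q, hq⟩ - 1 := by
              rw [dec_at, if_pos ⟨by omega, by omega⟩]
            rw [e2, e3,
              show a ⟨q, hq⟩ - 1 - (a ⟨p, hpn⟩ - 1) = a ⟨q, hq⟩ - a ⟨p, hpn⟩ from by omega]
            exact hVa q hq hpq hqkk
          · rcases hTa with h | ⟨h, hge⟩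
            · left; exact h
            · right; refine ⟨h, ?_⟩
              have e2 : dec n a j K ⟨p, hpn⟩ = a ⟨p, hpn⟩ - 1 := by
                rw [dec_at, if_pos ⟨by omega, by omega⟩]
              rcases le_or_gt (kk + 1) K with hkk1 | hkk1
              · have e3 : dec n a j K ⟨kk + 1, h⟩ = a ⟨kk + 1, h⟩ - 1 := by
                  rw [dec_at, if_pos ⟨by omega, by omega⟩]
                have hm2 : a ⟨p, hpn⟩ ≤ a ⟨kk + 1, h⟩ := haM p (kk + 1) hpn h (by omega)
                rw [e2, e3,
                  show a ⟨kk + 1, h⟩ - 1 - (a ⟨p, hpn⟩ - 1) = a ⟨kk + 1, h⟩ - a ⟨p, hpn⟩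
                    from by omega]
                exact hge
              · have e3 : dec n a j K ⟨kk + 1, h⟩ = a ⟨kk + 1, h⟩ := by
                  rw [dec_at, if_neg (by omega)]
                rw [e2, e3]
                exact le_trans hge (by omega)
      have hfe : dec n (dec n a j K) p kk = dec n (dec n a p kk) j K := by
        funext i
        simp only [dec]
        split_ifs <;> omega
      refine Relation.ReflTransGen.head (covers_iff.mpr ⟨p, kk, hcovg, rfl⟩) ?_
      rw [hfe]
      exact hK1tam
    · rcases eq_or_lt_of_le (show K + 1 ≤ p from hKp) with hKp1 | hKp1
      · -- case p = K+1
        subst hKp1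
        rcases hTK with hTn | ⟨hK1n', hTge⟩
        · exact absurd hTn (by omega)
        have hmjK1 : a ⟨j, hj⟩ ≤ a ⟨K + 1, hK1n'⟩ := haM j (K + 1) hj hK1n' (by omega)
        have haK1pos : 1 ≤ a ⟨K + 1, hpn⟩ := by
          have h1 : a ⟨K + 1 - 1, hgp1⟩ < a ⟨K + 1, hpn⟩ := hplt
          omega
        have haKn : K < n := by omega
        have haKlt : a ⟨K, haKn⟩ < a ⟨K + 1, hpn⟩ := by
          have h1 : a ⟨K + 1 - 1, hgp1⟩ < a ⟨K + 1, hpn⟩ := hplt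
          have h2 : a ⟨K + 1 - 1, hgp1⟩ = a ⟨K, haKn⟩ := rfl
          omega
        rcases lt_or_eq_of_le hTge with hstrict | heqq
        · -- case (ii): strict termination, prim end of c at j is still K
          have hprimCK : IsPrimEnd m n (dec n a (K + 1) kk) ⟨j, hj⟩ ⟨K, hKn⟩ := by
            rw [isPrimEnd_iff]
            refine ⟨hjK, ?_, ?_⟩
            · intro q hq hjq hqK
              have e1 : dec n a (K + 1) kk ⟨j, hj⟩ = a ⟨j, hj⟩ := by
                rw [dec_at, if_neg (by omega)]
              have e2 : dec n a (K + 1) kk ⟨q, hq⟩ = a ⟨q, hq⟩ := by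
                rw [dec_at, if_neg (by omega)]
              rw [e1, e2]; exact hVK q hq hjq hqK
            · right
              refine ⟨hK1n', ?_⟩
              have e1 : dec n a (K + 1) kk ⟨j, hj⟩ = a ⟨j, hj⟩ := by
                rw [dec_at, if_neg (by omega)]
              have e2 : dec n a (K + 1) kk ⟨K + 1, hK1n'⟩ = a ⟨K + 1, hK1n'⟩ - 1 := by
                rw [dec_at, if_pos ⟨by omega, by omega⟩]
              rw [e1, e2]
              exact harith1 _ _ _ hmjK1 hstrict
          have hK1K : K1 = K := congrArg Fin.val (primEnd_unique hprimK1 hprimCK)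
          rw [hK1K] at hK1tam
          have hcovg : CovAt m n (dec n a j K) (K + 1) kk := by
            refine ⟨by omega, hpn, hkkn, ?_, ?_⟩
            · have e1 : dec n a j K ⟨K + 1 - 1, Nat.lt_of_le_of_lt (Nat.sub_le (K+1) 1) hpn⟩
                  = a ⟨K, haKn⟩ - 1 := by
                have he : (⟨K + 1 - 1, Nat.lt_of_le_of_lt (Nat.sub_le (K+1) 1) hpn⟩ : Fin n)
                    = ⟨K, haKn⟩ := rfl
                rw [he, dec_at, if_pos ⟨by omega, by omega⟩]
              have e2 : dec n a j K ⟨K + 1, hpn⟩ = a ⟨K + 1, hpn⟩ := by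
                rw [dec_at, if_neg (by omega)]
              rw [e1, e2]
              exact lt_of_le_of_lt (Nat.sub_le _ 1) haKlt
            · rw [isPrimEnd_iff]
              refine ⟨hpkk, ?_, ?_⟩
              · intro q hq hpq hqkk
                have e2 : dec n a j K ⟨K + 1, hpn⟩ = a ⟨K + 1, hpn⟩ := by
                  rw [dec_at, if_neg (by omega)]
                have e3 : dec n a j K ⟨q, hq⟩ = a ⟨q, hq⟩ := by
                  rw [dec_at, if_neg (by omega)]
                rw [e2, e3]; exact hVa q hq hpq hqkk
              · rcases hTa with h | ⟨h, hge⟩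
                · left; exact h
                · right; refine ⟨h, ?_⟩
                  have e2 : dec n a j K ⟨K + 1, hpn⟩ = a ⟨K + 1, hpn⟩ := by
                    rw [dec_at, if_neg (by omega)]
                  have e3 : dec n a j K ⟨kk + 1, h⟩ = a ⟨kk + 1, h⟩ := by
                    rw [dec_at, if_neg (by omega)]
                  rw [e2, e3]; exact hge
          have hfe : dec n (dec n a j K) (K + 1) kk = dec n (dec n a (K + 1) kk) j K := by
            funext i
            simp only [dec]
            split_ifs <;> omega
          refine Relation.ReflTransGen.head (covers_iff.mpr ⟨K + 1, kk, hcovg, rfl⟩) ?_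
          rw [hfe]
          exact hK1tam
        · -- case (iii): equality; prim end of c at j is kk, need two covers
          have hD1 : 1 ≤ a ⟨K + 1, hK1n'⟩ - a ⟨j, hj⟩ := by
            have h1 : 1 ≤ K + 1 - j := by omega
            have h2 := Nat.mul_le_mul hm h1
            omega
          have hprimCkk : IsPrimEnd m n (dec n a (K + 1) kk) ⟨j, hj⟩ ⟨kk, hkkn⟩ := by
            rw [isPrimEnd_iff]
            refine ⟨by omega, ?_, ?_⟩
            · intro q hq hjq hqkk
              have e1 : dec n a (K + 1) kk ⟨j, hj⟩ = a ⟨j, hj⟩ := by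
                rw [dec_at, if_neg (by omega)]
              rw [e1]
              rcases le_or_gt q K with hqK | hqK
              · have e2 : dec n a (K + 1) kk ⟨q, hq⟩ = a ⟨q, hq⟩ := by
                  rw [dec_at, if_neg (by omega)]
                rw [e2]; exact hVK q hq hjq hqK
              · rcases eq_or_lt_of_le (show K + 1 ≤ q from hqK) with hqK1 | hqK1
                · subst hqK1
                  have e2 : dec n a (K + 1) kk ⟨K + 1, hq⟩ = a ⟨K + 1, hq⟩ - 1 := by
                    rw [dec_at, if_pos ⟨by omega, by omega⟩]
                  rw [e2]
                  show a ⟨K + 1, hK1n'⟩ - 1 - a ⟨j, hj⟩ < m * (K + 1 - j)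
                  rw [heqq]
                  exact harith5 _ _ hD1
                · have e2 : dec n a (K + 1) kk ⟨q, hq⟩ = a ⟨q, hq⟩ - 1 := by
                    rw [dec_at, if_pos ⟨by omega, by omega⟩]
                  rw [e2]
                  have h4 : a ⟨q, hq⟩ - a ⟨K + 1, hpn⟩ < m * (q - (K + 1)) :=
                    hVa q hq (by omega) hqkk
                  have hsplit : m * (q - j) = m * (q - (K + 1)) + m * (K + 1 - j) :=
                    mul_sub_split m q (K + 1) j (by omega) (by omega)
                  have hmono1 : a ⟨K + 1, hpn⟩ ≤ a ⟨q, hq⟩ :=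
                    haM (K + 1) q hpn hq (by omega)
                  rw [hsplit]
                  exact harith2 _ _ _ _ _ hmjK1 hmono1 h4 heqq
            · rcases hTa with h | ⟨h, hge⟩
              · left; exact h
              · right; refine ⟨h, ?_⟩
                have e1 : dec n a (K + 1) kk ⟨j, hj⟩ = a ⟨j, hj⟩ := by
                  rw [dec_at, if_neg (by omega)]
                have e2 : dec n a (K + 1) kk ⟨kk + 1, h⟩ = a ⟨kk + 1, h⟩ := by
                  rw [dec_at, if_neg (by omega)]
                rw [e1, e2]
                have hsplit : m * (kk + 1 - j) = m * (kk + 1 - (K + 1)) + m * (K + 1 - j) :=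
                  mul_sub_split m (kk + 1) (K + 1) j (by omega) (by omega)
                have hmono1 : a ⟨K + 1, hpn⟩ ≤ a ⟨kk + 1, h⟩ :=
                  haM (K + 1) (kk + 1) hpn h (by omega)
                rw [hsplit]
                exact harith3 _ _ _ _ _ hmjK1 hmono1 hge heqq
          have hK1kk : K1 = kk := congrArg Fin.val (primEnd_unique hprimK1 hprimCkk)
          rw [hK1kk] at hK1tam
          -- two covers: from dec a j K, twice decrement [K+1, kk]
          have hcovg1 : CovAt m n (dec n a j K) (K + 1) kk := by
            refine ⟨by omega, hpn, hkkn, ?_, ?_⟩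
            · have e1 : dec n a j K ⟨K + 1 - 1, Nat.lt_of_le_of_lt (Nat.sub_le (K+1) 1) hpn⟩
                  = a ⟨K, haKn⟩ - 1 := by
                have he : (⟨K + 1 - 1, Nat.lt_of_le_of_lt (Nat.sub_le (K+1) 1) hpn⟩ : Fin n)
                    = ⟨K, haKn⟩ := rfl
                rw [he, dec_at, if_pos ⟨by omega, by omega⟩]
              have e2 : dec n a j K ⟨K + 1, hpn⟩ = a ⟨K + 1, hpn⟩ := by
                rw [dec_at, if_neg (by omega)]
              rw [e1, e2]
              exact lt_of_le_of_lt (Nat.sub_le _ 1) haKlt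
            · rw [isPrimEnd_iff]
              refine ⟨hpkk, ?_, ?_⟩
              · intro q hq hpq hqkk
                have e2 : dec n a j K ⟨K + 1, hpn⟩ = a ⟨K + 1, hpn⟩ := by
                  rw [dec_at, if_neg (by omega)]
                have e3 : dec n a j K ⟨q, hq⟩ = a ⟨q, hq⟩ := by
                  rw [dec_at, if_neg (by omega)]
                rw [e2, e3]; exact hVa q hq hpq hqkk
              · rcases hTa with h | ⟨h, hge⟩
                · left; exact h
                · right; refine ⟨h, ?_⟩
                  have e2 : dec n a j K ⟨K + 1, hpn⟩ = a ⟨K + 1, hpn⟩ := by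
                    rw [dec_at, if_neg (by omega)]
                  have e3 : dec n a j K ⟨kk + 1, h⟩ = a ⟨kk + 1, h⟩ := by
                    rw [dec_at, if_neg (by omega)]
                  rw [e2, e3]; exact hge
          have hcovg2 : CovAt m n (dec n (dec n a j K) (K + 1) kk) (K + 1) kk := by
            refine ⟨by omega, hpn, hkkn, ?_, ?_⟩
            · have e1 : dec n (dec n a j K) (K + 1) kk
                  ⟨K + 1 - 1, Nat.lt_of_le_of_lt (Nat.sub_le (K+1) 1) hpn⟩
                  = a ⟨K, haKn⟩ - 1 := by
                have he : (⟨K + 1 - 1, Nat.lt_of_le_of_lt (Nat.sub_le (K+1) 1) hpn⟩ : Fin n)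
                    = ⟨K, haKn⟩ := rfl
                rw [he, dec_at, if_neg (by omega), dec_at, if_pos ⟨by omega, by omega⟩]
              have e2 : dec n (dec n a j K) (K + 1) kk ⟨K + 1, hpn⟩
                  = a ⟨K + 1, hpn⟩ - 1 := by
                rw [dec_at, if_pos ⟨by omega, by omega⟩, dec_at, if_neg (by omega)]
              have h2 : a ⟨j, hj⟩ ≤ a ⟨K, haKn⟩ := haM j K hj haKn hjK
              rw [e1, e2]
              exact harith4 _ _ _ haj1 h2 haKlt
            · rw [isPrimEnd_iff]
              refine ⟨hpkk, ?_, ?_⟩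
              · intro q hq hpq hqkk
                have e2 : dec n (dec n a j K) (K + 1) kk ⟨K + 1, hpn⟩
                    = a ⟨K + 1, hpn⟩ - 1 := by
                  rw [dec_at, if_pos ⟨by omega, by omega⟩, dec_at, if_neg (by omega)]
                have e3 : dec n (dec n a j K) (K + 1) kk ⟨q, hq⟩
                    = a ⟨q, hq⟩ - 1 := by
                  rw [dec_at, if_pos ⟨by omega, by omega⟩, dec_at, if_neg (by omega)]
                rw [e2, e3,
                  show a ⟨q, hq⟩ - 1 - (a ⟨K + 1, hpn⟩ - 1) = a ⟨q, hq⟩ - a ⟨K + 1, hpn⟩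
                    from by
                      have := haM (K + 1) q hpn hq (by omega)
                      omega]
                exact hVa q hq hpq hqkk
              · rcases hTa with h | ⟨h, hge⟩
                · left; exact h
                · right; refine ⟨h, ?_⟩
                  have e2 : dec n (dec n a j K) (K + 1) kk ⟨K + 1, hpn⟩
                      = a ⟨K + 1, hpn⟩ - 1 := by
                    rw [dec_at, if_pos ⟨by omega, by omega⟩, dec_at, if_neg (by omega)]
                  have e3 : dec n (dec n a j K) (K + 1) kk ⟨kk + 1, h⟩
                      = a ⟨kk + 1, h⟩ := by
                    rw [dec_at, if_neg (by omega), dec_at, if_neg (by omega)]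
                  rw [e2, e3]
                  exact le_trans hge (by omega)
          have hfe : dec n (dec n (dec n a j K) (K + 1) kk) (K + 1) kk
              = dec n (dec n a (K + 1) kk) j kk := by
            funext i
            simp only [dec]
            split_ifs <;> omega
          refine Relation.ReflTransGen.head (covers_iff.mpr ⟨K + 1, kk, hcovg1, rfl⟩)
            (Relation.ReflTransGen.head (covers_iff.mpr ⟨K + 1, kk, hcovg2, rfl⟩) ?_)
          rw [hfe]
          exact hK1tam
      · -- case (iv): K + 1 < p, segments disjoint and non-adjacent
        have hprimCK : IsPrimEnd m n (dec n a p kk) ⟨j, hj⟩ ⟨K, hKn⟩ := by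
          rw [isPrimEnd_iff]
          refine ⟨hjK, ?_, ?_⟩
          · intro q hq hjq hqK
            have e1 : dec n a p kk ⟨j, hj⟩ = a ⟨j, hj⟩ := by
              rw [dec_at, if_neg (by omega)]
            have e2 : dec n a p kk ⟨q, hq⟩ = a ⟨q, hq⟩ := by
              rw [dec_at, if_neg (by omega)]
            rw [e1, e2]; exact hVK q hq hjq hqK
          · rcases hTK with h | ⟨h, hge⟩
            · left; exact h
            · right; refine ⟨h, ?_⟩
              have e1 : dec n a p kk ⟨j, hj⟩ = a ⟨j, hj⟩ := by
                rw [dec_at, if_neg (by omega)]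
              have e2 : dec n a p kk ⟨K + 1, h⟩ = a ⟨K + 1, h⟩ := by
                rw [dec_at, if_neg (by omega)]
              rw [e1, e2]; exact hge
        have hK1K : K1 = K := congrArg Fin.val (primEnd_unique hprimK1 hprimCK)
        rw [hK1K] at hK1tam
        have hcovg : CovAt m n (dec n a j K) p kk := by
          refine ⟨hp0, hpn, hkkn, ?_, ?_⟩
          · have e1 : dec n a j K ⟨p - 1, Nat.lt_of_le_of_lt (Nat.sub_le p 1) hpn⟩
                = a ⟨p - 1, hgp1⟩ := by
              rw [dec_at, if_neg (by omega)]
            have e2 : dec n a j K ⟨p, hpn⟩ = a ⟨p, hpn⟩ := by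
              rw [dec_at, if_neg (by omega)]
            rw [e1, e2]; exact hplt
          · rw [isPrimEnd_iff]
            refine ⟨hpkk, ?_, ?_⟩
            · intro q hq hpq hqkk
              have e2 : dec n a j K ⟨p, hpn⟩ = a ⟨p, hpn⟩ := by
                rw [dec_at, if_neg (by omega)]
              have e3 : dec n a j K ⟨q, hq⟩ = a ⟨q, hq⟩ := by
                rw [dec_at, if_neg (by omega)]
              rw [e2, e3]; exact hVa q hq hpq hqkk
            · rcases hTa with h | ⟨h, hge⟩
              · left; exact h
              · right; refine ⟨h, ?_⟩
                have e2 : dec n a j K ⟨p, hpn⟩ = a ⟨p, hpn⟩ := by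
                  rw [dec_at, if_neg (by omega)]
                have e3 : dec n a j K ⟨kk + 1, h⟩ = a ⟨kk + 1, h⟩ := by
                  rw [dec_at, if_neg (by omega)]
                rw [e2, e3]; exact hge
        have hfe : dec n (dec n a j K) p kk = dec n (dec n a p kk) j K := by
          funext i
          simp only [dec]
          split_ifs <;> omega
        refine Relation.ReflTransGen.head (covers_iff.mpr ⟨p, kk, hcovg, rfl⟩) ?_
        rw [hfe]
        exact hK1tam

end TamariEL

namespace TamariEL

lemma labels_cons_cons (x y : Fin n → ℕ) (l : List (Fin n → ℕ)) :
    labels n (x :: y :: l) = lbl n x y :: labels n (y :: l) := rfl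

lemma chain_tamari : ∀ (c : List (Fin n → ℕ)) (x y : Fin n → ℕ),
    c.Chain' (Covers m n) → c.head? = some x → c.getLast? = some y → TamariLE m n x y := by
  intro c
  induction c with
  | nil => intro x y _ h _; simp at h
  | cons u t ih =>
    intro x y hch hh hl
    rw [List.head?_cons, Option.some_inj] at hh
    have hhs := hh.symm
    subst hhs
    cases t with
    | nil =>
      simp only [List.getLast?_singleton, Option.some_inj] at hl
      subst hl
      exact Relation.ReflTransGen.refl
    | cons v r =>
      rw [List.Chain', List.isChain_cons_cons] at hch
      rw [List.getLast?_cons_cons] at hl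
      exact Relation.ReflTransGen.head hch.1 (ih v y hch.2 rfl hl)

lemma lblLT_trans {p q r : ℕ × ℕ} (h1 : LblLT p q) (h2 : LblLT q r) : LblLT p r := by
  unfold LblLT at *
  omega

lemma chain'_head_rel : ∀ (l : List (ℕ × ℕ)) (h0 : ℕ × ℕ), (h0 :: l).Chain' LblLT →
    ∀ L ∈ l, LblLT h0 L := by
  intro l
  induction l with
  | nil => intro h0 _ L hL; cases hL
  | cons v r ih =>
    intro h0 hch L hL
    rw [List.Chain', List.isChain_cons_cons] at hch
    rcases List.mem_cons.mp hL with rfl | hL'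
    · exact hch.1
    · exact lblLT_trans hch.1 (ih v hch.2 L hL')

lemma exists_label_le : ∀ (c : List (Fin n → ℕ)) (x y : Fin n → ℕ),
    c.Chain' (Covers m n) → c.head? = some x → c.getLast? = some y →
    ∀ (q : ℕ) (hq : q < n), x ⟨q, hq⟩ ≠ y ⟨q, hq⟩ →
    ∃ L ∈ labels n c, L.1 ≤ q := by
  intro c
  induction c with
  | nil => intro x y _ hh _ _ _ _; simp at hh
  | cons u t ih =>
    intro x y hch hh hl q hq hne
    rw [List.head?_cons, Option.some_inj] at hh
    have hhs := hh.symm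
    subst hhs
    cases t with
    | nil =>
      simp only [List.getLast?_singleton, Option.some_inj] at hl
      subst hl; exact absurd rfl hne
    | cons v r =>
      rw [List.Chain', List.isChain_cons_cons] at hch
      rw [List.getLast?_cons_cons] at hl
      by_cases hxy : x ⟨q, hq⟩ = v ⟨q, hq⟩
      · obtain ⟨L, hL, hLq⟩ := ih v y hch.2 rfl hl q hq (by rw [← hxy]; exact hne)
        exact ⟨L, List.mem_cons_of_mem _ hL, hLq⟩
      · refine ⟨lbl n x v, List.mem_cons_self, ?_⟩
        show diffIdx n x v ≤ q
        apply Nat.sInf_le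
        simp only [Set.mem_setOf_eq, extSeq, dif_pos hq]
        exact hxy

lemma diffIdx_dec {a : Fin n → ℕ} {p k : ℕ} (h : CovAt m n a p k) (hpn : p < n) :
    diffIdx n a (dec n a p k) = p :=
  congrArg Prod.fst (lbl_dec h hpn)

lemma singleton_case (a : Fin n → ℕ) :
    (IsMaxChn m n a a [a] ∧ Rising n [a]) ∧
    (∀ c', IsMaxChn m n a a c' → Rising n c' → c' = [a]) ∧
    (∀ c', IsMaxChn m n a a c' → LexLE (labels n [a]) (labels n c')) := by
  refine ⟨⟨⟨List.isChain_singleton a, rfl, rfl⟩, List.isChain_nil⟩, ?_, ?_⟩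
  · intro c' hc' _
    obtain ⟨hch, hh, hl⟩ := hc'
    cases c' with
    | nil => simp at hh
    | cons u t =>
      rw [List.head?_cons, Option.some_inj] at hh
      have hhs := hh.symm
      subst hhs
      cases t with
      | nil => rfl
      | cons v r =>
        exfalso
        rw [List.Chain', List.isChain_cons_cons] at hch
        rw [List.getLast?_cons_cons] at hl
        have h1 : TamariLE m n v a := chain_tamari (v :: r) v a hch.2 rfl hl
        have h2 := covers_sum_lt hch.1
        have h3 := tamari_sum_le h1
        omega
  · intro c' _
    rcases hll : labels n c' with _ | ⟨L, l⟩
    · left; rfl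
    · right; exact List.Lex.nil

lemma main (hm : 0 < m) {b : Fin n → ℕ} (hb : IsDyck m n b) :
    ∀ (N : ℕ) (a : Fin n → ℕ), (∑ i, a i) ≤ N → IsDyck m n a → TamariLE m n a b →
    ∃ c : List (Fin n → ℕ),
      (IsMaxChn m n a b c ∧ Rising n c) ∧
      (∀ c', IsMaxChn m n a b c' → Rising n c' → c' = c) ∧
      (∀ c', IsMaxChn m n a b c' → LexLE (labels n c) (labels n c')) := by
  intro N
  induction N with
  | zero =>
    intro a hsum ha hab
    have hba := tamari_pointwise_le hab
    have heq : a = b := by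
      funext i
      have h1 : a i ≤ ∑ i', a i' :=
        Finset.single_le_sum (f := fun i' => a i') (fun _ _ => Nat.zero_le _)
          (Finset.mem_univ i)
      have h2 := hba i
      omega
    subst heq
    exact ⟨[a], singleton_case a⟩
  | succ N ih =>
    intro a hsum ha hab
    by_cases hne : a = b
    · subst hne
      exact ⟨[a], singleton_case a⟩
    · obtain ⟨hj, hnej, hminj⟩ := diffIdx_spec (n := n) hne
      set j := diffIdx n a b with hjdef
      obtain ⟨K, hcovK, htamK⟩ := key hm hb a hab ha j hj hnej hminj
      obtain ⟨hj0, hjn', hKn, hltj, hprimj⟩ := hcovK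
      have hcovK : CovAt m n a j K := ⟨hj0, hjn', hKn, hltj, hprimj⟩
      have hjK : j ≤ K := ((isPrimEnd_iff (m := m) a hjn' hKn).mp hprimj).1
      have haj1 : 0 < a ⟨j, hj⟩ :=
        Nat.lt_of_le_of_lt (Nat.zero_le _)
          (show a ⟨j - 1, Nat.lt_of_le_of_lt (Nat.sub_le j 1) hj⟩ < a ⟨j, hj⟩ from hltj)
      have hlblag : lbl n a (dec n a j K) = (j, a ⟨j, hj⟩) := lbl_dec hcovK hj
      have hcovers : Covers m n a (dec n a j K) := covers_iff.mpr ⟨j, K, hcovK, rfl⟩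
      have hgdyck : IsDyck m n (dec n a j K) := covers_dyck ha hcovers
      have hgsum : (∑ i, dec n a j K i) ≤ N := by
        have h1 := covers_sum_lt hcovers
        omega
      obtain ⟨c', ⟨⟨hch', hh', hl'⟩, hrise'⟩, huniq', hlex'⟩ :=
        ih (dec n a j K) hgsum hgdyck htamK
      cases c' with
      | nil => simp at hh'
      | cons g0 t' =>
      rw [List.head?_cons, Option.some_inj] at hh'
      have hhs' := hh'.symm
      subst hhs'
      refine ⟨a :: dec n a j K :: t', ⟨⟨?_, rfl, ?_⟩, ?_⟩, ?_, ?_⟩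
      · exact List.isChain_cons_cons.mpr ⟨hcovers, hch'⟩
      · rw [List.getLast?_cons_cons]; exact hl'
      · -- Rising
        cases t' with
        | nil => exact List.isChain_singleton _
        | cons x r =>
          have hcgx := (List.isChain_cons_cons.mp hch').1
          have hch'' := (List.isChain_cons_cons.mp hch').2
          have hl'' : (x :: r).getLast? = some b := by
            rw [List.getLast?_cons_cons] at hl'; exact hl'
          have htamxb : TamariLE m n x b := chain_tamari (x :: r) x b hch'' rfl hl''
          have hxb := tamari_pointwise_le htamxb
          obtain ⟨p2, k2, hc2, hxeq⟩ := covers_iff.mp hcgx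
          obtain ⟨hp20, hp2n, hk2n, hlt2, hprim2⟩ := hc2
          have hc2' : CovAt m n (dec n a j K) p2 k2 := ⟨hp20, hp2n, hk2n, hlt2, hprim2⟩
          have hg2pos : 0 < dec n a j K ⟨p2, hp2n⟩ :=
            Nat.lt_of_le_of_lt (Nat.zero_le _)
              (show dec n a j K ⟨p2 - 1, Nat.lt_of_le_of_lt (Nat.sub_le p2 1) hp2n⟩
                  < dec n a j K ⟨p2, hp2n⟩ from hlt2)
          have hp2j : j ≤ p2 := by
            by_contra hcc
            push_neg at hcc
            have h1 : dec n a j K ⟨p2, hp2n⟩ = b ⟨p2, hp2n⟩ := by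
              rw [dec_at, if_neg (by omega)]
              exact hminj p2 hp2n hcc
            have h2 := hxb ⟨p2, hp2n⟩
            have hp2k2 : p2 ≤ k2 :=
              ((isPrimEnd_iff (m := m) (dec n a j K) hp2n hk2n).mp hprim2).1
            rw [hxeq, dec_at, if_pos ⟨le_refl _, hp2k2⟩] at h2
            omega
          show List.Chain' LblLT
            (lbl n a (dec n a j K) :: lbl n (dec n a j K) x :: labels n (x :: r))
          rw [List.Chain', List.isChain_cons_cons]
          constructor
          · rw [hlblag, hxeq, lbl_dec hc2' hp2n]
            rcases eq_or_lt_of_le hp2j with heq2 | hlt2j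
            · subst heq2
              have e : dec n a j K ⟨j, hp2n⟩ = a ⟨j, hp2n⟩ - 1 := by
                rw [dec_at, if_pos ⟨le_refl _, hjK⟩]
              rw [e]
              exact Or.inr ⟨rfl, Nat.sub_lt haj1 one_pos⟩
            · exact Or.inl hlt2j
          · exact hrise'
      · -- uniqueness
        intro c'' hmax hrise
        obtain ⟨hch2, hh2, hl2⟩ := hmax
        cases c'' with
        | nil => simp at hh2
        | cons u t2 =>
        rw [List.head?_cons, Option.some_inj] at hh2
        have hhs2 := hh2.symm
        subst hhs2
        cases t2 with
        | nil =>
          exfalso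
          simp only [List.getLast?_singleton, Option.some_inj] at hl2
          exact hne hl2
        | cons x r =>
          rw [List.Chain', List.isChain_cons_cons] at hch2
          rw [List.getLast?_cons_cons] at hl2
          have hcovx := hch2.1
          have htamxb : TamariLE m n x b := chain_tamari (x :: r) x b hch2.2 rfl hl2
          have hxb := tamari_pointwise_le htamxb
          obtain ⟨p2, k2, hc2, hxeq⟩ := covers_iff.mp hcovx
          obtain ⟨hp20, hp2n, hk2n, hlt2, hprim2⟩ := hc2
          have hc2' : CovAt m n a p2 k2 := ⟨hp20, hp2n, hk2n, hlt2, hprim2⟩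
          have ha2pos : 0 < a ⟨p2, hp2n⟩ :=
            Nat.lt_of_le_of_lt (Nat.zero_le _)
              (show a ⟨p2 - 1, Nat.lt_of_le_of_lt (Nat.sub_le p2 1) hp2n⟩
                  < a ⟨p2, hp2n⟩ from hlt2)
          have hp2j : j ≤ p2 := by
            by_contra hcc
            push_neg at hcc
            have h1 : a ⟨p2, hp2n⟩ = b ⟨p2, hp2n⟩ := hminj p2 hp2n hcc
            have h2 := hxb ⟨p2, hp2n⟩
            have hp2k2 : p2 ≤ k2 :=
              ((isPrimEnd_iff (m := m) a hp2n hk2n).mp hprim2).1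
            rw [hxeq, dec_at, if_pos ⟨le_refl _, hp2k2⟩] at h2
            omega
          rcases eq_or_lt_of_le hp2j with heq2 | hlt2j
          · subst heq2
            have hk2K : k2 = K := covAt_unique hc2' hcovK
            subst hk2K
            subst hxeq
            have hmax2 : IsMaxChn m n (dec n a j k2) b (dec n a j k2 :: r) :=
              ⟨hch2.2, rfl, hl2⟩
            have hrise2 : Rising n (dec n a j k2 :: r) := List.IsChain.tail hrise
            have := huniq' (dec n a j k2 :: r) hmax2 hrise2
            rw [this]
          · exfalso
            have hxj : x ⟨j, hj⟩ ≠ b ⟨j, hj⟩ := by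
              rw [hxeq, dec_at, if_neg (by omega)]
              exact hnej
            obtain ⟨L, hL, hLq⟩ := exists_label_le (x :: r) x b hch2.2 rfl hl2 j hj hxj
            have hlblx : lbl n a x = (p2, a ⟨p2, hp2n⟩) := by
              rw [hxeq]; exact lbl_dec hc2' hp2n
            have hchainlbl : (lbl n a x :: labels n (x :: r)).Chain' LblLT := hrise
            have hrel := chain'_head_rel (labels n (x :: r)) (lbl n a x) hchainlbl L hL
            rw [hlblx] at hrel
            rcases hrel with h | ⟨h, _⟩
            · simp only at h; omega
            · simp only at h; omega
      · -- lex minimality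
        intro c'' hmax
        obtain ⟨hch2, hh2, hl2⟩ := hmax
        cases c'' with
        | nil => simp at hh2
        | cons u t2 =>
        rw [List.head?_cons, Option.some_inj] at hh2
        have hhs2 := hh2.symm
        subst hhs2
        cases t2 with
        | nil =>
          exfalso
          simp only [List.getLast?_singleton, Option.some_inj] at hl2
          exact hne hl2
        | cons x r =>
          rw [List.Chain', List.isChain_cons_cons] at hch2
          rw [List.getLast?_cons_cons] at hl2
          have hcovx := hch2.1
          have htamxb : TamariLE m n x b := chain_tamari (x :: r) x b hch2.2 rfl hl2
          have hxb := tamari_pointwise_le htamxb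
          obtain ⟨p2, k2, hc2, hxeq⟩ := covers_iff.mp hcovx
          obtain ⟨hp20, hp2n, hk2n, hlt2, hprim2⟩ := hc2
          have hc2' : CovAt m n a p2 k2 := ⟨hp20, hp2n, hk2n, hlt2, hprim2⟩
          have ha2pos : 0 < a ⟨p2, hp2n⟩ :=
            Nat.lt_of_le_of_lt (Nat.zero_le _)
              (show a ⟨p2 - 1, Nat.lt_of_le_of_lt (Nat.sub_le p2 1) hp2n⟩
                  < a ⟨p2, hp2n⟩ from hlt2)
          have hp2j : j ≤ p2 := by
            by_contra hcc
            push_neg at hcc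
            have h1 : a ⟨p2, hp2n⟩ = b ⟨p2, hp2n⟩ := hminj p2 hp2n hcc
            have h2 := hxb ⟨p2, hp2n⟩
            have hp2k2 : p2 ≤ k2 :=
              ((isPrimEnd_iff (m := m) a hp2n hk2n).mp hprim2).1
            rw [hxeq, dec_at, if_pos ⟨le_refl _, hp2k2⟩] at h2
            omega
          have hlblx : lbl n a x = (p2, a ⟨p2, hp2n⟩) := by
            rw [hxeq]; exact lbl_dec hc2' hp2n
          rcases eq_or_lt_of_le hp2j with heq2 | hlt2j
          · subst heq2
            have hk2K : k2 = K := covAt_unique hc2' hcovK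
            subst hk2K
            subst hxeq
            have hmax2 : IsMaxChn m n (dec n a j k2) b (dec n a j k2 :: r) :=
              ⟨hch2.2, rfl, hl2⟩
            have := hlex' (dec n a j k2 :: r) hmax2
            have h1 : labels n (a :: dec n a j k2 :: t')
                = lbl n a (dec n a j k2) :: labels n (dec n a j k2 :: t') := rfl
            have h2 : labels n (a :: dec n a j k2 :: r)
                = lbl n a (dec n a j k2) :: labels n (dec n a j k2 :: r) := rfl
            rcases this with heq3 | hlex3
            · left; rw [h1, h2, heq3]
            · right; rw [h1, h2]; exact List.Lex.cons hlex3
          · right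
            have h1 : labels n (a :: dec n a j K :: t')
                = lbl n a (dec n a j K) :: labels n (dec n a j K :: t') := rfl
            have h2 : labels n (a :: x :: r) = lbl n a x :: labels n (x :: r) := rfl
            rw [h1, h2, hlblag, hlblx]
            exact List.Lex.rel (Or.inl hlt2j)

end TamariEL

/-- The labeling `λ(a,b) = (j, a_j)` is an EL-labeling of `T_n^(m)`: every interval
`[a,b]` contains exactly one rising maximal chain, and this chain is
lexicographically first among all maximal chains in `[a,b]`. -/
theorem tamari_EL_labeling (m n : ℕ) (hm : 0 < m) (hn : 0 < n)
    (a b : Fin n → ℕ) (ha : IsDyck m n a) (hb : IsDyck m n b)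
    (hab : TamariLE m n a b) :
    ∃ c : List (Fin n → ℕ),
      (IsMaxChn m n a b c ∧ Rising n c) ∧
      (∀ c' : List (Fin n → ℕ), IsMaxChn m n a b c' → Rising n c' → c' = c) ∧
      (∀ c' : List (Fin n → ℕ), IsMaxChn m n a b c' →
        LexLE (labels n c) (labels n c')) := by
  obtain ⟨c, h1, h2, h3⟩ := TamariEL.main hm hb (∑ i, a i) a (le_refl _) ha hab
  exact ⟨c, h1, h2, h3⟩
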